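/- For real α with 0 < α < 1 and every natural number m, the following Gamma-binomial summation identity holds: Σ_{k=0}^{m} C(α,k) · (m!/( (m-k)! · Γ(k+1-α))) = Γ(m+1)/Γ(m+1-α). Equivalently, the series formula ∂_t^α u = Σ_{k≥0} C(α,k) · t^{k-α}/Γ(k+1-α) · u^{(k)}(t) agrees with the Riemann–Liouville power rule when applied to u(t) = t^m. -/

import Mathlib

open Real

/-- Generalized binomial coefficient `C(α, k) = α(α-1)⋯(α-k+1)/k!`. -/
noncomputable def genBinom (α : ℝ) (k : ℕ) : ℝ :=
  (∏ i ∈ Finset.range k, (α - i)) / (Nat.factorial k)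

lemma descPoch_eval_eq_prod (r : ℝ) (n : ℕ) :
    (descPochhammer ℝ n).eval r = ∏ i ∈ Finset.range n, (r - i) := by
  induction n with
  | zero => simp
  | succ n ih => rw [descPochhammer_succ_eval, ih, Finset.prod_range_succ]

lemma genBinom_eq_choose (r : ℝ) (n : ℕ) : genBinom r n = Ring.choose r n := by
  have h1 : (descPochhammer ℤ n).smeval r = (descPochhammer ℝ n).eval r := by
    rw [Polynomial.descPochhammer_smeval_eq_ascPochhammer, Polynomial.ascPochhammer_smeval_eq_eval,
      descPochhammer_eval_eq_ascPochhammer]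
  have h2 := Ring.descPochhammer_eq_factorial_smul_choose r n
  rw [h1, descPoch_eval_eq_prod] at h2
  have hfac : (Nat.factorial n : ℝ) ≠ 0 := by positivity
  rw [genBinom, h2, nsmul_eq_mul]
  field_simp

lemma genBinom_vandermonde (x y : ℝ) (m : ℕ) :
    ∑ k ∈ Finset.range (m + 1), genBinom x k * genBinom y (m - k) =
      genBinom (x + y) m := by
  simp only [genBinom_eq_choose]
  rw [Ring.add_choose_eq m (mul_comm x y), ← Finset.Nat.sum_antidiagonal_eq_sum_range_succ
    (f := fun i j => Ring.choose x i * Ring.choose y j)]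

lemma prod_eq_gamma (x : ℝ) : ∀ j : ℕ, 0 < x + 1 - j →
    ∏ i ∈ Finset.range j, (x - i) = Real.Gamma (x + 1) / Real.Gamma (x + 1 - j) := by
  intro j
  induction j with
  | zero =>
    intro h
    simp only [Nat.cast_zero, sub_zero] at *
    rw [Finset.prod_range_zero, div_self (Real.Gamma_pos_of_pos h).ne']
  | succ j ih =>
    intro h
    have hj : (0:ℝ) < x - j := by push_cast at h ⊢; linarith
    have hx : 0 < x + 1 - j := by push_cast at h ⊢; linarith
    rw [Finset.prod_range_succ, ih hx]
    have : x + 1 - (j:ℝ) = (x - j) + 1 := by ring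
    rw [this, Real.Gamma_add_one hj.ne']
    have hne : Real.Gamma (x - j) ≠ 0 := (Real.Gamma_pos_of_pos hj).ne'
    have h2 : x + 1 - ((j:ℕ)+1 : ℕ) = x - j := by push_cast; ring
    rw [h2]
    field_simp

lemma genBinom_gamma (x : ℝ) (j : ℕ) (h : 0 < x + 1 - j) :
    genBinom x j = Real.Gamma (x + 1) / ((Nat.factorial j : ℝ) * Real.Gamma (x + 1 - j)) := by
  rw [genBinom, prod_eq_gamma x j h, div_div, mul_comm]

theorem genBinom_gamma_sum (α : ℝ) (hα0 : 0 < α) (hα1 : α < 1) (m : ℕ) :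
    ∑ k ∈ Finset.range (m + 1),
        genBinom α k *
          ((Nat.factorial m : ℝ) /
            ((Nat.factorial (m - k) : ℝ) * Real.Gamma ((k : ℝ) + 1 - α))) =
      Real.Gamma ((m : ℝ) + 1) / Real.Gamma ((m : ℝ) + 1 - α) := by
  have hG : 0 < Real.Gamma ((m:ℝ) + 1 - α) :=
    Real.Gamma_pos_of_pos (by push_cast; linarith [Nat.cast_nonneg (α := ℝ) m])
  have key : ∀ k ∈ Finset.range (m + 1),
      genBinom α k * ((Nat.factorial m : ℝ) /
          ((Nat.factorial (m - k) : ℝ) * Real.Gamma ((k : ℝ) + 1 - α))) =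
      (Nat.factorial m : ℝ) / Real.Gamma ((m:ℝ) + 1 - α) *
        (genBinom α k * genBinom ((m:ℝ) - α) (m - k)) := by
    intro k hk
    have hkm : k ≤ m := Nat.lt_succ_iff.mp (Finset.mem_range.mp hk)
    have hcast : ((m - k : ℕ) : ℝ) = (m : ℝ) - k := by
      push_cast [hkm]; ring
    have harg : (0:ℝ) < ((m:ℝ) - α) + 1 - ((m - k : ℕ) : ℝ) := by
      rw [hcast]; push_cast; linarith
    have hb := genBinom_gamma ((m:ℝ) - α) (m - k) harg
    have e1 : (m:ℝ) - α + 1 - ((m - k : ℕ) : ℝ) = (k:ℝ) + 1 - α := by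
      rw [hcast]; ring
    have e2 : (m:ℝ) - α + 1 = (m:ℝ) + 1 - α := by ring
    rw [hb, e1, e2]
    have h1 : Real.Gamma ((k:ℝ) + 1 - α) ≠ 0 := by
      refine (Real.Gamma_pos_of_pos ?_).ne'
      have : (0:ℝ) ≤ k := Nat.cast_nonneg k
      linarith
    have h2 : ((Nat.factorial (m - k) : ℝ)) ≠ 0 := by positivity
    field_simp
  rw [Finset.sum_congr rfl key, ← Finset.mul_sum, genBinom_vandermonde]
  have : α + ((m:ℝ) - α) = (m:ℝ) := by ring
  rw [this]
  have hself : genBinom ((m:ℝ)) m = 1 := by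
    rw [genBinom_eq_choose]
    rw [show ((m:ℝ)) = ((m:ℕ) : ℝ) from rfl, Ring.choose_natCast]
    simp
  rw [hself, mul_one, Real.Gamma_nat_eq_factorial]
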